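/- Let G be a weighted graph with sup_x Deg(x) ≤ D and suppose |Δ^k a(x)| ≤ A₃·(2D)^k·exp(A₄·(k + d(x,p))·ln(k + d(x,p))) for all k with 0 < A₄ < 1. Then for δ < 1/(2De), the function v(x,t) = Σ_{k≥0} Δ^k a(x)·t^k/k! solves the heat equation ∂_t v = Δv on V × (−δ, 0] with v(x,0) = a(x). -/

import Mathlib

open Real Filter Topology

/-- A weighted graph: symmetric nonnegative edge weights, positive vertex
weights, locally finite. -/
structure WeightedGraph (V : Type*) where
  ω : V → V → ℝ
  μ : V → ℝ
  symm : ∀ x y, ω x y = ω y x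
  nonneg : ∀ x y, 0 ≤ ω x y
  loopless : ∀ x, ω x x = 0
  μ_pos : ∀ x, 0 < μ x
  locFin : ∀ x, (Function.support (ω x)).Finite

namespace WeightedGraph

variable {V : Type*}

/-- The graph Laplacian Δf(x) = Σ_y (ω_{xy}/μ_x)(f(y) - f(x)). -/
noncomputable def lap (G : WeightedGraph V) (f : V → ℝ) (x : V) : ℝ :=
  ∑' y, (G.ω x y / G.μ x) * (f y - f x)

/-- The weighted degree Deg(x) = Σ_y ω_{xy}/μ_x. -/
noncomputable def deg (G : WeightedGraph V) (x : V) : ℝ :=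
  ∑' y, G.ω x y / G.μ x

/-- The underlying simple graph: x ~ y iff ω_{xy} ≠ 0. -/
def adj (G : WeightedGraph V) : SimpleGraph V :=
  SimpleGraph.fromRel (fun x y => G.ω x y ≠ 0)

/-- The combinatorial graph distance. -/
noncomputable def dist (G : WeightedGraph V) (x y : V) : ℕ := G.adj.dist x y

/-- Iterated Laplacian Δ^k. -/
noncomputable def lapIter (G : WeightedGraph V) : ℕ → (V → ℝ) → (V → ℝ)
  | 0, f => f
  | (k+1), f => G.lap (G.lapIter k f)

end WeightedGraph

lemma log_step {s : ℝ} (hs : 1 ≤ s) :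
    (s+1) * Real.log (s+1) ≤ s * Real.log s + (Real.log (s+1) + 1) := by
  have hs0 : (0:ℝ) < s := lt_of_lt_of_le one_pos hs
  have h1 : Real.log (s+1) - Real.log s ≤ 1/s := by
    have h := Real.log_le_sub_one_of_pos (show (0:ℝ) < (s+1)/s by positivity)
    rw [Real.log_div (by linarith) (ne_of_gt hs0)] at h
    have : (s+1)/s - 1 = 1/s := by field_simp; ring
    linarith
  have h3 : s * (Real.log (s+1) - Real.log s) ≤ 1 := by
    calc s * (Real.log (s+1) - Real.log s) ≤ s * (1/s) :=
          mul_le_mul_of_nonneg_left h1 hs0.le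
      _ = 1 := by field_simp
  nlinarith

lemma exp_step {A₄ : ℝ} (hA₄0 : 0 < A₄) {s : ℝ} (hs : 1 ≤ s) :
    Real.exp (A₄*(s+1)*Real.log (s+1)) ≤
      Real.exp (A₄*s*Real.log s) * ((s+1)^A₄ * Real.exp A₄) := by
  have hs1 : (0:ℝ) < s + 1 := by linarith
  have hrw : (s+1)^A₄ = Real.exp (A₄ * Real.log (s+1)) := by
    rw [Real.rpow_def_of_pos hs1]; ring_nf
  rw [hrw, ← Real.exp_add, ← Real.exp_add, Real.exp_le_exp]
  have := log_step hs
  nlinarith [hA₄0.le]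

lemma summable_majorant {A₃ B r A₄ : ℝ} (hA₃ : 0 < A₃) (hB : 0 < B) (hr : 1 ≤ r)
    (hA₄0 : 0 < A₄) (hA₄1 : A₄ < 1) (d : ℕ) :
    Summable (fun k : ℕ => ((k:ℝ)+1) * (A₃ * B^k *
      Real.exp (A₄*((k:ℝ)+(d:ℝ))*Real.log ((k:ℝ)+(d:ℝ))) * r^k / (Nat.factorial k : ℝ))) := by
  have hr0 : (0:ℝ) < r := lt_of_lt_of_le one_pos hr
  set T : ℕ → ℝ := fun k => ((k:ℝ)+1) * (A₃ * B^k *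
      Real.exp (A₄*((k:ℝ)+(d:ℝ))*Real.log ((k:ℝ)+(d:ℝ))) * r^k / (Nat.factorial k : ℝ)) with hT
  have hTpos : ∀ k, 0 < T k := by
    intro k
    have : (0:ℝ) < (Nat.factorial k : ℝ) := by exact_mod_cast Nat.factorial_pos k
    positivity
  set C : ℝ := 2 * B * r * ((d:ℝ)+1)^A₄ * Real.exp A₄ with hC
  have hC0 : 0 < C := by positivity
  have hQ : Tendsto (fun k : ℕ => C * ((k:ℝ)+1)^(A₄-1)) atTop (𝓝 0) := by
    have h1 : Tendsto (fun k : ℕ => ((k:ℝ)+1)) atTop atTop :=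
      tendsto_atTop_add_const_right _ _ tendsto_natCast_atTop_atTop
    have h2 : Tendsto (fun x : ℝ => x ^ (A₄-1)) atTop (𝓝 0) := by
      have := tendsto_rpow_neg_atTop (show (0:ℝ) < 1 - A₄ by linarith)
      simpa [neg_sub] using this
    have h3 := h2.comp h1
    simpa using h3.const_mul C
  have hratio : ∀ k : ℕ, 1 ≤ k → T (k+1) ≤ (C * ((k:ℝ)+1)^(A₄-1)) * T k := by
    intro k hk
    have hk1 : (1:ℝ) ≤ (k:ℝ) := by exact_mod_cast hk
    have hs : (1:ℝ) ≤ (k:ℝ) + (d:ℝ) := by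
      have : (0:ℝ) ≤ (d:ℝ) := Nat.cast_nonneg d
      linarith
    have hkpos : (0:ℝ) < (k:ℝ) + 1 := by linarith
    have hfac : (0:ℝ) < (Nat.factorial k : ℝ) := by exact_mod_cast Nat.factorial_pos k
    have hcast : ((k+1:ℕ):ℝ) + (d:ℝ) = ((k:ℝ)+(d:ℝ)) + 1 := by push_cast; ring
    have hE : Real.exp (A₄*(((k+1:ℕ):ℝ)+(d:ℝ))*Real.log (((k+1:ℕ):ℝ)+(d:ℝ))) ≤
        Real.exp (A₄*((k:ℝ)+(d:ℝ))*Real.log ((k:ℝ)+(d:ℝ))) *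
          ((((k:ℝ)+(d:ℝ))+1)^A₄ * Real.exp A₄) := by
      rw [hcast]; exact exp_step hA₄0 hs
    have hpowle : (((k:ℝ)+(d:ℝ))+1)^A₄ ≤ ((d:ℝ)+1)^A₄ * ((k:ℝ)+1)^A₄ := by
      have hle : ((k:ℝ)+(d:ℝ))+1 ≤ ((d:ℝ)+1) * ((k:ℝ)+1) := by
        have h0d : (0:ℝ) ≤ (d:ℝ) := Nat.cast_nonneg d
        nlinarith
      calc (((k:ℝ)+(d:ℝ))+1)^A₄ ≤ (((d:ℝ)+1) * ((k:ℝ)+1))^A₄ :=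
            Real.rpow_le_rpow (by positivity) hle hA₄0.le
        _ = ((d:ℝ)+1)^A₄ * ((k:ℝ)+1)^A₄ :=
            Real.mul_rpow (by positivity) (by positivity)
    have hrw1 : ((k:ℝ)+1)^(A₄-1) = ((k:ℝ)+1)^A₄ / ((k:ℝ)+1) := by
      rw [Real.rpow_sub hkpos, Real.rpow_one]
    have hfacsucc : (Nat.factorial (k+1) : ℝ) = ((k:ℝ)+1) * (Nat.factorial k : ℝ) := by
      rw [Nat.factorial_succ]; push_cast; ring
    have hEk0 : (0:ℝ) < Real.exp (A₄*((k:ℝ)+(d:ℝ))*Real.log ((k:ℝ)+(d:ℝ))) := Real.exp_pos _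
    set Ek := Real.exp (A₄*((k:ℝ)+(d:ℝ))*Real.log ((k:ℝ)+(d:ℝ))) with hEkdef
    set u := ((k:ℝ)+1)^A₄ with hu
    set w := ((d:ℝ)+1)^A₄ with hw
    have hu0 : 0 < u := Real.rpow_pos_of_pos hkpos _
    have hw0 : 0 < w := Real.rpow_pos_of_pos (by positivity) _
    calc T (k+1) = ((k:ℝ)+2) * (A₃ * (B^k*B) *
          Real.exp (A₄*(((k+1:ℕ):ℝ)+(d:ℝ))*Real.log (((k+1:ℕ):ℝ)+(d:ℝ))) * (r^k*r) /
            (((k:ℝ)+1) * (Nat.factorial k : ℝ))) := by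
          simp only [hT, hfacsucc]
          push_cast
          ring
      _ ≤ ((k:ℝ)+2) * (A₃ * (B^k*B) * (Ek * (w * u * Real.exp A₄)) * (r^k*r) /
            (((k:ℝ)+1) * (Nat.factorial k : ℝ))) := by
          gcongr
          calc Real.exp (A₄*(((k+1:ℕ):ℝ)+(d:ℝ))*Real.log (((k+1:ℕ):ℝ)+(d:ℝ)))
              ≤ Ek * ((((k:ℝ)+(d:ℝ))+1)^A₄ * Real.exp A₄) := hE
            _ ≤ Ek * ((w * u) * Real.exp A₄) := by
                gcongr
            _ = Ek * (w * u * Real.exp A₄) := by ring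
      _ ≤ (C * ((k:ℝ)+1)^(A₄-1)) * T k := by
          simp only [hT]
          rw [← hEkdef, hrw1, hC]
          have h2 : ((k:ℝ)+2) ≤ 2 * ((k:ℝ)+1) := by linarith
          have hrhs : 2*B*r*w*Real.exp A₄*(u/((k:ℝ)+1)) *
              (((k:ℝ)+1)*(A₃*B^k*Ek*r^k/(Nat.factorial k:ℝ)))
              = (2*((k:ℝ)+1)) * (A₃*(B^k*B)*(Ek*(w*u*Real.exp A₄))*(r^k*r)) /
                (((k:ℝ)+1)*(Nat.factorial k:ℝ)) := by
            field_simp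
          rw [hrhs]
          have hX : (0:ℝ) ≤ A₃*(B^k*B)*(Ek*(w*u*Real.exp A₄))*(r^k*r) := by positivity
          have hY : (0:ℝ) ≤ A₃*(B^k*B)*(Ek*(w*u*Real.exp A₄))*(r^k*r) /
              (((k:ℝ)+1)*(Nat.factorial k:ℝ)) := by positivity
          have hfin : 2*((k:ℝ)+1) * (A₃*(B^k*B)*(Ek*(w*u*Real.exp A₄))*(r^k*r)) /
              (((k:ℝ)+1)*(Nat.factorial k:ℝ)) =
              (2*((k:ℝ)+1)) * (A₃*(B^k*B)*(Ek*(w*u*Real.exp A₄))*(r^k*r) /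
                (((k:ℝ)+1)*(Nat.factorial k:ℝ))) := by ring
          rw [hfin]
          exact mul_le_mul_of_nonneg_right h2 hY
  apply summable_of_ratio_norm_eventually_le (r := 1/2) (by norm_num)
  have h1 : ∀ᶠ k : ℕ in atTop, C * ((k:ℝ)+1)^(A₄-1) ≤ 1/2 :=
    hQ.eventually_le_const (show (0:ℝ) < 1/2 by norm_num)
  filter_upwards [h1, eventually_ge_atTop 1] with k hk hk1
  rw [Real.norm_eq_abs, Real.norm_eq_abs, abs_of_pos (hTpos _), abs_of_pos (hTpos _)]
  calc T (k+1) ≤ (C * ((k:ℝ)+1)^(A₄-1)) * T k := hratio k hk1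
    _ ≤ (1/2) * T k := mul_le_mul_of_nonneg_right hk (hTpos k).le

/-- v(x,t) = Σ Δ^k a(x) t^k/k! solves the heat equation on
V × (−δ, 0] with v(x,0) = a(x). -/
theorem series_solves_heat_equation {V : Type*} (G : WeightedGraph V)
    (hconn : G.adj.Connected) (p : V) (D A₃ A₄ δ : ℝ)
    (hD : ∀ x, G.deg x ≤ D) (hA₃ : 0 < A₃) (hA₄0 : 0 < A₄) (hA₄1 : A₄ < 1)
    (a : V → ℝ)
    (ha : ∀ (k : ℕ) (x : V), |G.lapIter k a x| ≤
      A₃ * (2 * D) ^ k * Real.exp (A₄ * ((k : ℝ) + (G.dist x p : ℝ)) *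
        Real.log ((k : ℝ) + (G.dist x p : ℝ))))
    (hδ0 : 0 < δ) (hδ : δ < 1 / (2 * D * Real.exp 1))
    (v : V → ℝ → ℝ)
    (hv : ∀ x t, v x t = ∑' k : ℕ, G.lapIter k a x * t ^ k / (Nat.factorial k : ℝ)) :
    (∀ x, v x 0 = a x) ∧
    (∀ x, ∀ t ∈ Set.Ioc (-δ) (0:ℝ),
      HasDerivWithinAt (v x) (G.lap (fun y => v y t) x) (Set.Ioc (-δ) (0:ℝ)) t) := by
  have hDe : 0 < 2 * D * Real.exp 1 := by
    by_contra h
    push_neg at h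
    have : 1 / (2 * D * Real.exp 1) ≤ 0 := one_div_nonpos.mpr h
    linarith
  have hDpos : 0 < D := by
    have he := Real.exp_pos 1
    nlinarith
  set B := 2 * D with hB
  have hBpos : 0 < B := by positivity
  set R := δ + 1 with hR
  have hR1 : (1:ℝ) ≤ R := by linarith
  have hR0 : (0:ℝ) < R := by linarith
  set M : V → ℕ → ℝ := fun x k => ((k:ℝ)+1) * (A₃ * B^k *
      Real.exp (A₄ * ((k : ℝ) + (G.dist x p : ℝ)) *
        Real.log ((k : ℝ) + (G.dist x p : ℝ))) * R^k / (Nat.factorial k : ℝ)) with hM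
  have hMsum : ∀ x, Summable (M x) := fun x =>
    summable_majorant hA₃ hBpos hR1 hA₄0 hA₄1 (G.dist x p)
  have hbound : ∀ (x : V) (t : ℝ), |t| ≤ R → ∀ k,
      |G.lapIter k a x * t^k / (Nat.factorial k : ℝ)| ≤ M x k := by
    intro x t ht k
    have hfac : (0:ℝ) < (Nat.factorial k : ℝ) := by exact_mod_cast Nat.factorial_pos k
    rw [abs_div, abs_mul, abs_pow, abs_of_pos hfac]
    have h1 : |G.lapIter k a x| ≤ A₃ * B^k *
        Real.exp (A₄ * ((k : ℝ) + (G.dist x p : ℝ)) *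
          Real.log ((k : ℝ) + (G.dist x p : ℝ))) := ha k x
    calc |G.lapIter k a x| * |t|^k / (Nat.factorial k:ℝ)
        ≤ (A₃ * B^k * Real.exp (A₄ * ((k : ℝ) + (G.dist x p : ℝ)) *
            Real.log ((k : ℝ) + (G.dist x p : ℝ)))) * R^k / (Nat.factorial k:ℝ) := by
          gcongr
      _ ≤ M x k := by
          simp only [hM]
          refine le_mul_of_one_le_left (by positivity) ?_
          have := Nat.cast_nonneg (α := ℝ) k
          linarith
  have hsum : ∀ (x : V) (t : ℝ), |t| ≤ R →
      Summable (fun k => G.lapIter k a x * t^k / (Nat.factorial k:ℝ)) := by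
    intro x t ht
    refine Summable.of_norm_bounded (hMsum x) (fun k => ?_)
    rw [Real.norm_eq_abs]
    exact hbound x t ht k
  have hlapS : ∀ (f : V → ℝ) (x : V), G.lap f x =
      ∑ y ∈ (G.locFin x).toFinset, (G.ω x y / G.μ x) * (f y - f x) := by
    intro f x
    apply tsum_eq_sum
    intro y hy
    have hω : G.ω x y = 0 := by
      by_contra hne
      exact hy ((G.locFin x).mem_toFinset.mpr (by simpa [Function.mem_support] using hne))
    simp [hω]
  constructor
  · intro x
    rw [hv x 0]
    rw [tsum_eq_single 0 (by
      intro k hk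
      simp [zero_pow hk])]
    show G.lapIter 0 a x * (0:ℝ)^(0:ℕ) / (Nat.factorial 0 : ℝ) = a x
    simp [WeightedGraph.lapIter]
  · intro x t ht
    have htR : |t| ≤ R := by
      rw [abs_le]
      constructor <;> [linarith [ht.1]; linarith [ht.2]]
    have hts : t ∈ Set.Ioo (-R) R := ⟨by linarith [ht.1], by linarith [ht.2]⟩
    have h0s : (0:ℝ) ∈ Set.Ioo (-R) R := ⟨by linarith, by linarith⟩
    have hg : ∀ (k : ℕ), ∀ u ∈ Set.Ioo (-R) R,
        HasDerivAt (fun u : ℝ => G.lapIter k a x * u^k / (Nat.factorial k:ℝ))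
          (G.lapIter k a x * ((k:ℝ) * u^(k-1)) / (Nat.factorial k:ℝ)) u := by
      intro k u _
      have h1 : HasDerivAt (fun u : ℝ => u^k) ((k:ℝ)*u^(k-1)) u := hasDerivAt_pow k u
      exact (h1.const_mul (G.lapIter k a x)).div_const (Nat.factorial k:ℝ)
    have hg'le : ∀ (k : ℕ) (u : ℝ), u ∈ Set.Ioo (-R) R →
        ‖G.lapIter k a x * ((k:ℝ) * u^(k-1)) / (Nat.factorial k:ℝ)‖ ≤ M x k := by
      intro k u hu
      have habs : |u| ≤ R := le_of_lt (abs_lt.mpr ⟨hu.1, hu.2⟩)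
      have hfac : (0:ℝ) < (Nat.factorial k : ℝ) := by exact_mod_cast Nat.factorial_pos k
      rw [Real.norm_eq_abs, abs_div, abs_mul, abs_mul, abs_pow, abs_of_pos hfac,
        abs_of_nonneg (Nat.cast_nonneg (α := ℝ) k)]
      have h2 : (k:ℝ) * |u|^(k-1) ≤ ((k:ℝ)+1) * R^k := by
        have hpow : |u|^(k-1) ≤ R^k := by
          calc |u|^(k-1) ≤ R^(k-1) := pow_le_pow_left₀ (abs_nonneg u) habs _
            _ ≤ R^k := pow_le_pow_right₀ hR1 (Nat.sub_le k 1)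
        have hk0 : (0:ℝ) ≤ (k:ℝ) := Nat.cast_nonneg k
        have hpnn : (0:ℝ) ≤ |u|^(k-1) := pow_nonneg (abs_nonneg u) _
        nlinarith [pow_nonneg (le_trans zero_le_one hR1) k]
      calc |G.lapIter k a x| * ((k:ℝ) * |u|^(k-1)) / (Nat.factorial k:ℝ)
          ≤ (A₃ * B^k * Real.exp (A₄ * ((k : ℝ) + (G.dist x p : ℝ)) *
              Real.log ((k : ℝ) + (G.dist x p : ℝ)))) * (((k:ℝ)+1) * R^k) /
                (Nat.factorial k:ℝ) := by
            have hnum : |G.lapIter k a x| * ((k:ℝ) * |u|^(k-1)) ≤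
                (A₃ * B^k * Real.exp (A₄ * ((k : ℝ) + (G.dist x p : ℝ)) *
                  Real.log ((k : ℝ) + (G.dist x p : ℝ)))) * (((k:ℝ)+1) * R^k) :=
              mul_le_mul (ha k x) h2
                (mul_nonneg (Nat.cast_nonneg k) (pow_nonneg (abs_nonneg u) _))
                (by positivity)
            exact (div_le_div_iff_of_pos_right hfac).mpr hnum
        _ = M x k := by simp only [hM]; ring
    have hg0 : Summable (fun k => G.lapIter k a x * (0:ℝ)^k / (Nat.factorial k:ℝ)) := by
      refine hsum x 0 ?_
      simpa using hR0.le
    have hderiv : HasDerivAt (fun u => ∑' k, G.lapIter k a x * u^k / (Nat.factorial k:ℝ))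
        (∑' k, G.lapIter k a x * ((k:ℝ) * t^(k-1)) / (Nat.factorial k:ℝ)) t :=
      hasDerivAt_tsum_of_isPreconnected (hMsum x) isOpen_Ioo
        (convex_Ioo _ _).isPreconnected hg hg'le h0s hg0 hts
    have hvx : v x = fun u => ∑' k, G.lapIter k a x * u^k / (Nat.factorial k:ℝ) :=
      funext (fun u => hv x u)
    have hg'sum : Summable (fun k => G.lapIter k a x * ((k:ℝ) * t^(k-1)) /
        (Nat.factorial k:ℝ)) := by
      refine Summable.of_norm_bounded (hMsum x) (fun k => hg'le k t hts)
    have hchain : (∑' k, G.lapIter k a x * ((k:ℝ) * t^(k-1)) / (Nat.factorial k:ℝ)) =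
        G.lap (fun y => v y t) x := by
      rw [Summable.tsum_eq_zero_add hg'sum]
      have hz : G.lapIter 0 a x * ((0:ℕ):ℝ) * (t:ℝ)^(0-1) / (Nat.factorial 0:ℝ) = 0 := by
        simp
      have hshift : ∀ k : ℕ, G.lapIter (k+1) a x * (((k+1:ℕ)):ℝ) * t^(k+1-1) /
          (Nat.factorial (k+1):ℝ) = G.lapIter (k+1) a x * t^k / (Nat.factorial k:ℝ) := by
        intro k
        have hfac : (0:ℝ) < (Nat.factorial k : ℝ) := by exact_mod_cast Nat.factorial_pos k
        rw [Nat.factorial_succ]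
        push_cast
        field_simp
      have e1 : (∑' k : ℕ, G.lapIter (k+1) a x * (((k+1:ℕ)):ℝ) * t^(k+1-1) /
          (Nat.factorial (k+1):ℝ)) = ∑' k : ℕ, G.lapIter (k+1) a x * t^k /
            (Nat.factorial k:ℝ) := tsum_congr hshift
      have e0 : G.lapIter 0 a x * (((0:ℕ)):ℝ) * t^(0-1) / (Nat.factorial 0:ℝ) = 0 := by simp
      simp only [mul_assoc] at e1 e0 ⊢
      rw [e0, zero_add, e1]
      -- now prove ∑' k, lapIter (k+1) a x * (t^k / k!) = lap (v · t) x
      have key : ∀ k : ℕ, G.lapIter (k+1) a x * t^k / (Nat.factorial k:ℝ) =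
          ∑ y ∈ (G.locFin x).toFinset, (G.ω x y / G.μ x) *
            (G.lapIter k a y * t^k/(Nat.factorial k:ℝ) -
             G.lapIter k a x * t^k/(Nat.factorial k:ℝ)) := by
        intro k
        have hdef : G.lapIter (k+1) a x = G.lap (G.lapIter k a) x := rfl
        rw [hdef, hlapS, Finset.sum_mul, Finset.sum_div]
        refine Finset.sum_congr rfl (fun y _ => by ring)
      rw [tsum_congr key]
      rw [Summable.tsum_finsetSum (fun y _ => ?_)]
      · rw [hlapS]
        refine Finset.sum_congr rfl (fun y _ => ?_)
        rw [tsum_mul_left]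
        congr 1
        rw [Summable.tsum_sub (hsum y t htR) (hsum x t htR), hv y t, hv x t]
      · exact ((hsum y t htR).sub (hsum x t htR)).mul_left (G.ω x y / G.μ x)
    rw [← hchain]
    have h2 : HasDerivAt (v x)
        (∑' k, G.lapIter k a x * ((k:ℝ) * t^(k-1)) / (Nat.factorial k:ℝ)) t := by
      rw [hvx]; exact hderiv
    exact h2.hasDerivWithinAt
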